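/- Let λ: ℕ → ℝ and a: ℕ → ℝ be arithmetic functions related by λ(n) = ∑_{d² m = n} μ(d) a(m) / d, where μ is the Möbius function. If |a(n)| ≤ d₄(n) for all n ≥ 1, then |λ(n)| ≤ d₅(n) for all n ≥ 1, where d_l(n) denotes the number of ways of writing n as an ordered product of l positive integers. -/
import Mathlib


/-- The `l`-fold divisor function `d_l(n)`: the number of ways of writing `n` as an
ordered product of `l` positive integers (defined by iterated Dirichlet convolution of
the constant function `1`). -/
def dFold : ℕ → ℕ → ℕ
  | 0, n => if n = 1 then 1 else 0
  | l + 1, n => ∑ d ∈ n.divisors, dFold l d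

/-- If `λ(n) = ∑_{d² m = n} μ(d) a(m) / d` and `|a(n)| ≤ d₄(n)`, then `|λ(n)| ≤ d₅(n)`. -/
theorem lambda_le_d5
    (lam a : ℕ → ℝ)
    (hrel : ∀ n : ℕ, 1 ≤ n → lam n =
      ∑ d ∈ Finset.Icc 1 n, if d ^ 2 ∣ n then
        ((ArithmeticFunction.moebius d : ℝ) / d) * a (n / d ^ 2) else 0)
    (ha : ∀ n : ℕ, 1 ≤ n → |a n| ≤ (dFold 4 n : ℝ)) :
    ∀ n : ℕ, 1 ≤ n → |lam n| ≤ (dFold 5 n : ℝ) := by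
  intro n hn
  have hn0 : n ≠ 0 := by omega
  rw [hrel n hn]
  have step1 : |∑ d ∈ Finset.Icc 1 n, if d ^ 2 ∣ n then
        ((ArithmeticFunction.moebius d : ℝ) / d) * a (n / d ^ 2) else 0|
      ≤ ∑ d ∈ Finset.Icc 1 n, if d ^ 2 ∣ n then (dFold 4 (n / d ^ 2) : ℝ) else 0 := by
    refine (Finset.abs_sum_le_sum_abs _ _).trans (Finset.sum_le_sum ?_)
    intro d hd
    have hd1 : 1 ≤ d := (Finset.mem_Icc.mp hd).1
    split_ifs with h
    · rw [abs_mul]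
      have hm : (1 : ℕ) ≤ n / d ^ 2 :=
        Nat.one_le_iff_ne_zero.mpr (Nat.div_ne_zero_iff_of_dvd h |>.mpr ⟨hn0, by positivity⟩)
      have h1 : |(ArithmeticFunction.moebius d : ℝ) / d| ≤ 1 := by
        rw [abs_div]
        have : |(ArithmeticFunction.moebius d : ℝ)| ≤ 1 := by
          have := ArithmeticFunction.abs_moebius_le_one (n := d)
          exact_mod_cast (by exact_mod_cast this : |((ArithmeticFunction.moebius d : ℤ) : ℝ)| ≤ 1)
        have hdr : (1 : ℝ) ≤ |(d : ℝ)| := by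
          rw [abs_of_nonneg (by positivity)]; exact_mod_cast hd1
        calc |(ArithmeticFunction.moebius d : ℝ)| / |(d : ℝ)|
            ≤ 1 / |(d : ℝ)| := by
              apply div_le_div_of_nonneg_right this (by linarith) |>.trans le_rfl
          _ ≤ 1 := by rw [div_le_one (by linarith)]; exact hdr
      calc |(ArithmeticFunction.moebius d : ℝ) / d| * |a (n / d ^ 2)|
          ≤ 1 * (dFold 4 (n / d ^ 2) : ℝ) :=
            mul_le_mul h1 (ha _ hm) (abs_nonneg _) zero_le_one
        _ = (dFold 4 (n / d ^ 2) : ℝ) := one_mul _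
    · simp
  refine step1.trans ?_
  rw [Finset.sum_ite, Finset.sum_const_zero, add_zero]
  have himg : ∑ d ∈ (Finset.Icc 1 n).filter (fun d => d ^ 2 ∣ n), (dFold 4 (n / d ^ 2) : ℝ)
      = ∑ e ∈ ((Finset.Icc 1 n).filter (fun d => d ^ 2 ∣ n)).image (fun d => d ^ 2),
          (dFold 4 (n / e) : ℝ) := by
    rw [Finset.sum_image]
    intro x hx y hy hxy
    exact Nat.pow_left_injective (by norm_num) hxy
  rw [himg]
  have hsub : ((Finset.Icc 1 n).filter (fun d => d ^ 2 ∣ n)).image (fun d => d ^ 2)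
      ⊆ n.divisors := by
    intro e he
    obtain ⟨d, hd, rfl⟩ := Finset.mem_image.mp he
    exact Nat.mem_divisors.mpr ⟨(Finset.mem_filter.mp hd).2, hn0⟩
  have final : ∑ e ∈ n.divisors, (dFold 4 (n / e) : ℝ) = (dFold 5 n : ℝ) := by
    rw [Nat.sum_div_divisors n (fun d => (dFold 4 d : ℝ))]
    show _ = ((∑ d ∈ n.divisors, dFold 4 d : ℕ) : ℝ)
    push_cast
    rfl
  calc ∑ e ∈ ((Finset.Icc 1 n).filter (fun d => d ^ 2 ∣ n)).image (fun d => d ^ 2),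
          (dFold 4 (n / e) : ℝ)
      ≤ ∑ e ∈ n.divisors, (dFold 4 (n / e) : ℝ) :=
        Finset.sum_le_sum_of_subset_of_nonneg hsub (fun _ _ _ => by positivity)
    _ = (dFold 5 n : ℝ) := final
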